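/- The order ∅[S_1,S_2,…,S_m] coincides with ∅[S_2,…,S_m] (i.e., the revision S_1 is redundant from the flat state) if and only if for every Q-combination Q of S_2,…,S_m, either Q entails S_1 or Q entails ¬S_1. -/
import Mathlib


/-- Propositional formulas over variables of type `α`. -/
inductive PropForm (α : Type) : Type
  | var : α → PropForm α
  | tru : PropForm α
  | fls : PropForm α
  | neg : PropForm α → PropForm α
  | conj : PropForm α → PropForm α → PropForm α
  | disj : PropForm α → PropForm α → PropForm α

namespace PropForm
/-- Evaluation of a formula in a valuation (model). -/
def eval {α : Type} (v : α → Bool) : PropForm α → Bool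
  | var a => v a
  | tru => true
  | fls => false
  | neg f => !(eval v f)
  | conj f g => eval v f && eval v g
  | disj f g => eval v f || eval v g
end PropForm

/-- A model `I` satisfies formula `A`. -/
def Sat {α : Type} (I : α → Bool) (A : PropForm α) : Prop := PropForm.eval I A = true

/-- The order induced by a single formula: `I ≤_A J` iff `I ⊨ A` or `J ⊭ A`. -/
def leA {α : Type} (A : PropForm α) (I J : α → Bool) : Prop := Sat I A ∨ ¬ Sat J A

/-- Auxiliary: the order generated from the flat state by a revision sequence given
in reverse order (most recent revision first). -/
def leSeqRev {α : Type} (I J : α → Bool) : List (PropForm α) → Prop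
  | [] => True
  | A :: S' => leA A I J ∧ (¬ leA A J I ∨ leSeqRev I J S')

/-- `I ≤_{∅S} J`: the order generated from the flat state by the sequence `S` of
lexicographic revisions (given in chronological order, so the last element of `S`
is the most recent revision).  It satisfies `leSeq [] I J ↔ True` and
`leSeq (S' ++ [A]) I J ↔ leA A I J ∧ (¬ leA A J I ∨ leSeq S' I J)`. -/
def leSeq {α : Type} (S : List (PropForm α)) (I J : α → Bool) : Prop :=
  leSeqRev I J S.reverse

/-- `I ≡_{∅S} J`: equivalence of models in the order generated by `S`. -/
def equivSeq {α : Type} (S : List (PropForm α)) (I J : α → Bool) : Prop :=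
  leSeq S I J ∧ leSeq S J I

/-- The Q-combination of formulas `S` determined by the Boolean vector `B`:
the conjunction over `i` of `S i` if `B i = true` and of `¬ S i` if `B i = false`. -/
def qcomb {α : Type} : List Bool → List (PropForm α) → PropForm α
  | b :: bs, s :: ss => PropForm.conj (if b then s else PropForm.neg s) (qcomb bs ss)
  | _, _ => PropForm.tru

section Aux
variable {α : Type}

lemma leSeqRev_append (I J : α → Bool) (A : PropForm α) :
    ∀ L : List (PropForm α),
      leSeqRev I J (L ++ [A]) ↔ leSeqRev I J L ∧ (¬ leSeqRev J I L ∨ leA A I J)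
  | [] => by simp [leSeqRev]
  | B :: L => by
    have h1 := leSeqRev_append I J A L
    simp only [List.cons_append, leSeqRev, h1]
    tauto

lemma leSeq_cons (I J : α → Bool) (A : PropForm α) (S : List (PropForm α)) :
    leSeq (A :: S) I J ↔ leSeq S I J ∧ (¬ leSeq S J I ∨ leA A I J) := by
  simp only [leSeq, List.reverse_cons]
  exact leSeqRev_append I J A S.reverse

lemma equivRev_iff (I J : α → Bool) :
    ∀ L : List (PropForm α),
      (leSeqRev I J L ∧ leSeqRev J I L) ↔ ∀ A ∈ L, PropForm.eval I A = PropForm.eval J A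
  | [] => by simp [leSeqRev]
  | B :: L => by
    have h1 := equivRev_iff I J L
    simp only [leSeqRev, List.mem_cons, forall_eq_or_imp, ← h1, leA, Sat]
    cases hI : PropForm.eval I B <;> cases hJ : PropForm.eval J B <;> simp

lemma equiv_iff (I J : α → Bool) (S : List (PropForm α)) :
    (leSeq S I J ∧ leSeq S J I) ↔ ∀ A ∈ S, PropForm.eval I A = PropForm.eval J A := by
  simp only [leSeq, equivRev_iff I J S.reverse, List.mem_reverse]

lemma sat_qcomb_self (I : α → Bool) :
    ∀ S : List (PropForm α), Sat I (qcomb (S.map (PropForm.eval I)) S)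
  | [] => rfl
  | A :: S => by
    have h := sat_qcomb_self I S
    simp only [List.map_cons, qcomb, Sat, PropForm.eval, Bool.and_eq_true]
    refine ⟨?_, h⟩
    cases hA : PropForm.eval I A <;> simp [hA, PropForm.eval]

lemma sat_qcomb_agree (I J : α → Bool) :
    ∀ (B : List Bool) (S : List (PropForm α)), B.length = S.length →
      Sat I (qcomb B S) → Sat J (qcomb B S) →
      ∀ A ∈ S, PropForm.eval I A = PropForm.eval J A
  | [], [], _, _, _ => by simp
  | b :: B, A :: S, h, hI, hJ => by
    simp only [qcomb, Sat, PropForm.eval, Bool.and_eq_true] at hI hJ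
    intro C hC
    rcases List.mem_cons.1 hC with rfl | hC
    · cases b <;> simp [PropForm.eval] at hI hJ <;>
        simp [hI.1, hJ.1]
    · exact sat_qcomb_agree I J B S (by simpa using h) hI.2 hJ.2 C hC

end Aux

/-- STATEMENT 10: `∅(S₁ :: S)` coincides with `∅S` iff every Q-combination of `S`
entails `S₁` or entails `¬S₁`. -/
theorem redundant_iff_qcomb_entails {α : Type} (S1 : PropForm α) (S : List (PropForm α)) :
    (∀ I J : α → Bool, leSeq (S1 :: S) I J ↔ leSeq S I J) ↔
      (∀ B : List Bool, B.length = S.length →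
        (∀ I : α → Bool, Sat I (qcomb B S) → Sat I S1) ∨
        (∀ I : α → Bool, Sat I (qcomb B S) → ¬ Sat I S1)) := by
  constructor
  · intro h B hB
    by_cases hex : ∃ I0, Sat I0 (qcomb B S) ∧ Sat I0 S1
    · obtain ⟨I0, hQ0, hS0⟩ := hex
      left
      intro I hQI
      have hag : ∀ A ∈ S, PropForm.eval I A = PropForm.eval I0 A :=
        sat_qcomb_agree I I0 B S hB hQI hQ0
      have hequiv : leSeq S I I0 ∧ leSeq S I0 I := (equiv_iff I I0 S).2 hag
      have := ((h I I0).2 hequiv.1)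
      rw [leSeq_cons] at this
      rcases this.2 with hc | hc
      · exact absurd hequiv.2 hc
      · rcases hc with hc | hc
        · exact hc
        · exact absurd hS0 hc
    · right
      intro I hQI hSI
      exact hex ⟨I, hQI, hSI⟩
  · intro h I J
    rw [leSeq_cons]
    constructor
    · exact fun h' => h'.1
    · intro hIJ
      refine ⟨hIJ, ?_⟩
      by_cases hJI : leSeq S J I
      · right
        have hag : ∀ A ∈ S, PropForm.eval I A = PropForm.eval J A :=
          (equiv_iff I J S).1 ⟨hIJ, hJI⟩
        set B := S.map (PropForm.eval I) with hBdef
        have hB : B.length = S.length := by simp [hBdef]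
        have hQI : Sat I (qcomb B S) := sat_qcomb_self I S
        have hmapeq : S.map (PropForm.eval I) = S.map (PropForm.eval J) :=
          List.map_congr_left hag
        have hQJ : Sat J (qcomb B S) := by
          rw [hBdef, hmapeq]; exact sat_qcomb_self J S
        rcases h B hB with hc | hc
        · exact Or.inl (hc I hQI)
        · exact Or.inr (hc J hQJ)
      · left; exact hJI
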